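/- For fixed x with 1 ≤ x ≤ n, and a uniformly random perfect matching M of K_{2n}, the probability that M contains a fixed x-matching X is at most 1 / Σ_{j=max(0,2x-n)}^{x} C(2x,2j)·(2j)!/(j!·2^j). -/

import Mathlib

open Finset

/-- A matching: a set of pairwise disjoint edges (2-element vertex sets). -/
def IsMatching {V : Type} [DecidableEq V] (M : Finset (Finset V)) : Prop :=
  (∀ e ∈ M, e.card = 2) ∧ (M : Set (Finset V)).Pairwise Disjoint

/-- A perfect matching of the complete graph on `V`: a matching covering every vertex. -/
def IsPerfectMatching {V : Type} [DecidableEq V] (M : Finset (Finset V)) : Prop :=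
  IsMatching M ∧ ∀ v : V, ∃ e ∈ M, v ∈ e

namespace PMaux
set_option linter.unusedSectionVars false

open Nat

variable {V : Type} [Fintype V] [DecidableEq V]

/-- Perfect matching of the vertex set `s`. -/
def PMOn (s : Finset V) (M : Finset (Finset V)) : Prop :=
  (∀ e ∈ M, e.card = 2) ∧ (∀ e ∈ M, ∀ f ∈ M, e ≠ f → Disjoint e f) ∧ M.biUnion id = s

/-- Perfect matchings of `s` whose edges meet `T` in at most one vertex. -/
noncomputable def pmSet (T s : Finset V) : Finset (Finset (Finset V)) :=
  @Finset.filter _ (fun M => PMOn s M ∧ ∀ e ∈ M, (e ∩ T).card ≤ 1)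
    (Classical.decPred _) Finset.univ

lemma mem_pmSet {T s : Finset V} {M : Finset (Finset V)} :
    M ∈ pmSet T s ↔ PMOn s M ∧ ∀ e ∈ M, (e ∩ T).card ≤ 1 := by
  classical
  simp [pmSet]

lemma PMOn.edge_subset {s : Finset V} {M : Finset (Finset V)} (h : PMOn s M)
    {e : Finset V} (he : e ∈ M) : e ⊆ s := by
  rw [← h.2.2]
  intro v hv
  exact Finset.mem_biUnion.2 ⟨e, he, hv⟩

variable [LinearOrder V]

/-- The partner of `a` in a matching `M`. -/
noncomputable def partner (M : Finset (Finset V)) (a : V) : V :=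
  if h : (((M.filter (fun e => a ∈ e)).biUnion id).erase a).Nonempty
  then (((M.filter (fun e => a ∈ e)).biUnion id).erase a).min' h else a

lemma partner_spec {M : Finset (Finset V)} {a : V} {e : Finset V}
    (hcard : ∀ e ∈ M, e.card = 2)
    (hdisj : ∀ e ∈ M, ∀ f ∈ M, e ≠ f → Disjoint e f)
    (he : e ∈ M) (hae : a ∈ e) :
    e = {a, partner M a} ∧ partner M a ≠ a := by
  have hfil : M.filter (fun e => a ∈ e) = {e} := by
    ext f
    simp only [Finset.mem_filter, Finset.mem_singleton]
    constructor
    · rintro ⟨hf, haf⟩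
      by_contra hne
      exact (Finset.disjoint_left.1 (hdisj f hf e he hne)) haf hae
    · rintro rfl; exact ⟨he, hae⟩
  have hbu : (M.filter (fun e => a ∈ e)).biUnion id = e := by
    rw [hfil, Finset.singleton_biUnion]; rfl
  have hcarde : (e.erase a).card = 1 := by
    rw [Finset.card_erase_of_mem hae, hcard e he]
  obtain ⟨b, hb⟩ := Finset.card_eq_one.1 hcarde
  have hu : ((M.filter (fun e => a ∈ e)).biUnion id).erase a = {b} := by rw [hbu, hb]
  have hpart : partner M a = b := by
    rw [partner, dif_pos (hu ▸ ⟨b, Finset.mem_singleton_self b⟩)]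
    simp only [hu]
    exact Finset.min'_singleton b
  have hbne : b ≠ a := by
    have hbe : b ∈ e.erase a := by rw [hb]; exact Finset.mem_singleton_self b
    exact Finset.ne_of_mem_erase hbe
  constructor
  · rw [hpart]
    have : e = insert a (e.erase a) := (Finset.insert_erase hae).symm
    rw [this, hb]
  · rw [hpart]; exact hbne

lemma PMOn_sdiff {s : Finset V} {M P : Finset (Finset V)} (h : PMOn s M) (hPM : P ⊆ M) :
    PMOn (s \ P.biUnion id) (M \ P) := by
  obtain ⟨hcard, hdisj, hbu⟩ := h
  refine ⟨fun e he => hcard e (Finset.mem_sdiff.1 he).1,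
    fun e he f hf => hdisj e (Finset.mem_sdiff.1 he).1 f (Finset.mem_sdiff.1 hf).1, ?_⟩
  ext v
  simp only [Finset.mem_biUnion, Finset.mem_sdiff, id_eq]
  constructor
  · rintro ⟨e, ⟨heM, heP⟩, hv⟩
    refine ⟨hbu ▸ Finset.mem_biUnion.2 ⟨e, heM, hv⟩, ?_⟩
    rintro ⟨p, hp, hvp⟩
    rcases eq_or_ne e p with rfl | hne
    · exact heP hp
    · exact (Finset.disjoint_left.1 (hdisj e heM p (hPM hp) hne)) hv hvp
  · rintro ⟨hvs, hnp⟩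
    obtain ⟨e, heM, hv⟩ := Finset.mem_biUnion.1 (hbu ▸ hvs : v ∈ M.biUnion id)
    exact ⟨e, ⟨heM, fun hP => hnp ⟨e, hP, hv⟩⟩, hv⟩

lemma PMOn_union {s t : Finset V} {M N : Finset (Finset V)} (h1 : PMOn s M) (h2 : PMOn t N)
    (hst : Disjoint s t) : PMOn (s ∪ t) (M ∪ N) := by
  have key : ∀ e ∈ M, ∀ f ∈ N, Disjoint e f := fun e he f hf =>
    Finset.disjoint_of_subset_left (PMOn.edge_subset h1 he)
      (Finset.disjoint_of_subset_right (PMOn.edge_subset h2 hf) hst)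
  obtain ⟨hc1, hd1, hb1⟩ := h1
  obtain ⟨hc2, hd2, hb2⟩ := h2
  refine ⟨?_, ?_, ?_⟩
  · intro e he
    rcases Finset.mem_union.1 he with h | h
    · exact hc1 e h
    · exact hc2 e h
  · intro e he f hf hne
    rcases Finset.mem_union.1 he with h | h <;> rcases Finset.mem_union.1 hf with h' | h'
    · exact hd1 e h f h' hne
    · exact key e h f h'
    · exact (key f h' e h).symm
    · exact hd2 e h f h' hne
  · ext v
    simp only [Finset.mem_biUnion, Finset.mem_union, ← hb1, ← hb2, id_eq]
    constructor
    · rintro ⟨e, he | he, hv⟩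
      · exact Or.inl ⟨e, he, hv⟩
      · exact Or.inr ⟨e, he, hv⟩
    · rintro (⟨e, he, hv⟩ | ⟨e, he, hv⟩)
      · exact ⟨e, Or.inl he, hv⟩
      · exact ⟨e, Or.inr he, hv⟩

lemma PMOn_card {s : Finset V} {M : Finset (Finset V)} (h : PMOn s M) :
    2 * M.card = s.card := by
  obtain ⟨hc, hd, hb⟩ := h
  have h1 : (M.biUnion id).card = ∑ e ∈ M, (id e).card :=
    Finset.card_biUnion (fun e he f hf hne => hd e he f hf hne)
  rw [← hb, h1]
  simp only [id_eq]
  rw [Finset.sum_congr rfl (fun e he => hc e he), Finset.sum_const, smul_eq_mul, mul_comm]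

lemma PMOn_erase {s : Finset V} {M : Finset (Finset V)} {e : Finset V} (h : PMOn s M)
    (he : e ∈ M) : PMOn (s \ e) (M.erase e) := by
  have := PMOn_sdiff h (Finset.singleton_subset_iff.2 he)
  rwa [Finset.singleton_biUnion, ← Finset.erase_eq, id_eq] at this

lemma PMOn_insert {s : Finset V} {N : Finset (Finset V)} {e : Finset V} (h : PMOn s N)
    (hcard : e.card = 2) (hdisj : Disjoint e s) : PMOn (s ∪ e) (insert e N) := by
  have h2 : PMOn e {e} := by
    refine ⟨fun f hf => by rw [Finset.mem_singleton.1 hf]; exact hcard,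
      fun f hf g hg hne => absurd (Finset.mem_singleton.1 hf ▸ Finset.mem_singleton.1 hg ▸ rfl) hne, ?_⟩
    rw [Finset.singleton_biUnion]; rfl
  have h3 := PMOn_union h h2 hdisj.symm
  have h4 : N ∪ {e} = insert e N := by ext f; simp [or_comm]
  rwa [h4] at h3


lemma pmSet_card_rec (T s : Finset V) (a : V) (ha : a ∈ s) :
    (pmSet T s).card =
      ∑ y ∈ (s.erase a).filter (fun y => (({a, y} : Finset V) ∩ T).card ≤ 1),
        (pmSet T (s \ {a, y})).card := by
  classical
  have key : ∀ M ∈ pmSet T s, ∃ e ∈ M, a ∈ e := by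
    intro M hM
    obtain ⟨⟨hc, hd, hb⟩, hcross⟩ := mem_pmSet.1 hM
    exact Finset.mem_biUnion.1 (hb ▸ ha)
  have hmaps : ∀ M ∈ pmSet T s,
      partner M a ∈ (s.erase a).filter (fun y => (({a, y} : Finset V) ∩ T).card ≤ 1) := by
    intro M hM
    obtain ⟨⟨hc, hd, hb⟩, hcross⟩ := mem_pmSet.1 hM
    obtain ⟨e, he, hae⟩ := key M hM
    obtain ⟨hedge, hne⟩ := partner_spec hc hd he hae
    rw [Finset.mem_filter, Finset.mem_erase]
    refine ⟨⟨hne, ?_⟩, ?_⟩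
    · exact (PMOn.edge_subset ⟨hc, hd, hb⟩ he) (hedge ▸ Finset.mem_insert_of_mem (Finset.mem_singleton_self _))
    · rw [← hedge]; exact hcross e he
  rw [Finset.card_eq_sum_card_fiberwise hmaps]
  refine Finset.sum_congr rfl (fun y hy => ?_)
  rw [Finset.mem_filter, Finset.mem_erase] at hy
  obtain ⟨⟨hya, hys⟩, hyT⟩ := hy
  have hpair : ({a, y} : Finset V).card = 2 := Finset.card_pair (Ne.symm hya)
  have hsub : ({a, y} : Finset V) ⊆ s := by
    intro v hv
    rcases Finset.mem_insert.1 hv with rfl | hv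
    · exact ha
    · rw [Finset.mem_singleton.1 hv]; exact hys
  refine Finset.card_bij' (fun M _ => M.erase {a, y}) (fun N _ => insert {a, y} N) ?_ ?_ ?_ ?_
  · intro M hM
    rw [Finset.mem_filter] at hM
    obtain ⟨hM1, hfib⟩ := hM
    obtain ⟨⟨hc, hd, hb⟩, hcross⟩ := mem_pmSet.1 hM1
    obtain ⟨e, he, hae⟩ := key M hM1
    obtain ⟨hedge, hne⟩ := partner_spec hc hd he hae
    have heM : ({a, y} : Finset V) ∈ M := by rw [← hfib, ← hedge]; exact he
    rw [mem_pmSet]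
    constructor
    · exact PMOn_erase ⟨hc, hd, hb⟩ heM
    · intro f hf; exact hcross f (Finset.mem_of_mem_erase hf)
  · intro N hN
    obtain ⟨hpm, hcross⟩ := mem_pmSet.1 hN
    have hdisj : Disjoint ({a, y} : Finset V) (s \ {a, y}) := disjoint_sdiff_self_right
    have hpm2 := PMOn_insert hpm hpair hdisj
    rw [Finset.sdiff_union_of_subset hsub] at hpm2
    rw [Finset.mem_filter, mem_pmSet]
    have hmemins : ({a, y} : Finset V) ∈ insert {a, y} N := Finset.mem_insert_self _ _
    obtain ⟨hedge', hne'⟩ :=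
      partner_spec hpm2.1 hpm2.2.1 hmemins (Finset.mem_insert_self a {y})
    refine ⟨⟨hpm2, ?_⟩, ?_⟩
    · intro f hf
      rcases Finset.mem_insert.1 hf with rfl | hf
      · exact hyT
      · exact hcross f hf
    · have hy2 : y ∈ ({a, partner (insert {a, y} N) a} : Finset V) :=
        hedge' ▸ Finset.mem_insert_of_mem (Finset.mem_singleton_self y)
      rcases Finset.mem_insert.1 hy2 with h' | h'
      · exact absurd h' hya
      · exact (Finset.mem_singleton.1 h').symm
  · intro M hM
    rw [Finset.mem_filter] at hM
    obtain ⟨hM1, hfib⟩ := hM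
    obtain ⟨⟨hc, hd, hb⟩, hcross⟩ := mem_pmSet.1 hM1
    obtain ⟨e, he, hae⟩ := key M hM1
    obtain ⟨hedge, hne⟩ := partner_spec hc hd he hae
    have heM : ({a, y} : Finset V) ∈ M := by rw [← hfib, ← hedge]; exact he
    exact Finset.insert_erase heM
  · intro N hN
    obtain ⟨⟨hc, hd, hb⟩, hcross⟩ := mem_pmSet.1 hN
    have hnotmem : ({a, y} : Finset V) ∉ N := by
      intro hmem
      have := PMOn.edge_subset ⟨hc, hd, hb⟩ hmem (Finset.mem_insert_self a {y})
      rw [Finset.mem_sdiff] at this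
      exact this.2 (Finset.mem_insert_self a {y})
    exact Finset.erase_insert hnotmem

lemma dF_step (m : ℕ) : (2 * m + 1) * (2 * m - 1)‼ = (2 * m + 1)‼ := by
  cases m with
  | zero => decide
  | succ k =>
    have h1 : 2 * (k + 1) + 1 = (2 * k + 1) + 2 := by omega
    have h2 : 2 * (k + 1) - 1 = 2 * k + 1 := by omega
    rw [h1, h2, Nat.doubleFactorial_add_two]

lemma pmSet_empty_card : ∀ (m : ℕ) (s : Finset V), s.card = 2 * m →
    (pmSet (∅ : Finset V) s).card = (2 * m - 1)‼ := by
  intro m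
  induction m with
  | zero =>
    intro s hs
    have hse : s = ∅ := Finset.card_eq_zero.1 (by omega)
    subst hse
    have : pmSet (∅ : Finset V) (∅ : Finset V) = {∅} := by
      ext M
      rw [mem_pmSet, Finset.mem_singleton]
      constructor
      · rintro ⟨⟨hc, hd, hb⟩, _⟩
        by_contra hne
        obtain ⟨e, he⟩ := Finset.nonempty_iff_ne_empty.2 hne
        have h2 : e.card = 2 := hc e he
        obtain ⟨v, hv⟩ := Finset.card_pos.1 (show 0 < e.card by omega)
        exact absurd (PMOn.edge_subset ⟨hc, hd, hb⟩ he hv) (Finset.notMem_empty v)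
      · rintro rfl
        exact ⟨⟨fun e he => absurd he (Finset.notMem_empty e),
          fun e he => absurd he (Finset.notMem_empty e), Finset.biUnion_empty⟩,
          fun e he => absurd he (Finset.notMem_empty e)⟩
    rw [this]
    simp
  | succ m ih =>
    intro s hs
    obtain ⟨a, ha⟩ := Finset.card_pos.1 (by omega : 0 < s.card)
    rw [pmSet_card_rec ∅ s a ha]
    have hfil : (s.erase a).filter (fun y => (({a, y} : Finset V) ∩ ∅).card ≤ 1) = s.erase a := by
      apply Finset.filter_true_of_mem
      intro y _
      simp
    rw [hfil]
    have hterm : ∀ y ∈ s.erase a, (pmSet (∅ : Finset V) (s \ {a, y})).card = (2 * m - 1)‼ := by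
      intro y hy
      rw [Finset.mem_erase] at hy
      apply ih
      have hsub : ({a, y} : Finset V) ⊆ s := by
        intro v hv
        rcases Finset.mem_insert.1 hv with rfl | hv
        · exact ha
        · rw [Finset.mem_singleton.1 hv]; exact hy.2
      rw [Finset.card_sdiff_of_subset hsub, Finset.card_pair (Ne.symm hy.1), hs]
      omega
    rw [Finset.sum_congr rfl hterm, Finset.sum_const, smul_eq_mul,
      Finset.card_erase_of_mem ha, hs]
    have : 2 * (m + 1) - 1 = 2 * m + 1 := by omega
    rw [this, ← dF_step m]

lemma dF_ineq {q : ℕ} (hq : 2 ≤ q) : (q - 1)‼ ≤ q * ((q - 1) * (q - 3)‼) := by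
  match q, hq with
  | 2, _ => decide
  | 3, _ => decide
  | (k + 4), _ =>
    have h1 : k + 4 - 1 = (k + 1) + 2 := by omega
    have h3 : k + 4 - 3 = k + 1 := by omega
    rw [h1, h3, Nat.doubleFactorial_add_two]
    have : (k + 1 + 2) * (k + 1)‼ ≤ (k + 4) * ((k + 1 + 2) * (k + 1)‼) :=
      Nat.le_mul_of_pos_left _ (by omega)
    calc (k + 1 + 2) * (k + 1)‼ ≤ (k + 4) * ((k + 1 + 2) * (k + 1)‼) := this
    _ = (k + 4) * ((k + 4 - 1) * (k + 1)‼) := by norm_num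

lemma allowed_eq {T s : Finset V} {a : V} (haT : a ∈ T) :
    (s.erase a).filter (fun y => (({a, y} : Finset V) ∩ T).card ≤ 1) = s \ T := by
  ext y
  simp only [Finset.mem_filter, Finset.mem_erase, Finset.mem_sdiff]
  constructor
  · rintro ⟨⟨hya, hys⟩, hcond⟩
    refine ⟨hys, fun hyT => ?_⟩
    have heq : ({a, y} : Finset V) ∩ T = {a, y} := by
      rw [Finset.inter_eq_left]
      intro v hv
      rcases Finset.mem_insert.1 hv with rfl | hv
      · exact haT
      · rw [Finset.mem_singleton.1 hv]; exact hyT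
    rw [heq, Finset.card_pair (Ne.symm hya)] at hcond
    omega
  · rintro ⟨hys, hyT⟩
    have hya : y ≠ a := fun h => hyT (h ▸ haT)
    refine ⟨⟨hya, hys⟩, ?_⟩
    have heq : ({a, y} : Finset V) ∩ T = {a} := by
      ext v
      simp only [Finset.mem_inter, Finset.mem_insert, Finset.mem_singleton]
      constructor
      · rintro ⟨rfl | rfl, hvT⟩
        · rfl
        · exact absurd hvT hyT
      · rintro rfl; exact ⟨Or.inl rfl, haT⟩
    rw [heq, Finset.card_singleton]

lemma inter_sdiff_pair {T s : Finset V} {a y : V} (hyT : y ∉ T) :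
    T ∩ (s \ ({a, y} : Finset V)) = (T ∩ s).erase a := by
  ext v
  simp only [Finset.mem_inter, Finset.mem_sdiff, Finset.mem_erase, Finset.mem_insert,
    Finset.mem_singleton]
  constructor
  · rintro ⟨hvT, hvs, hvn⟩
    exact ⟨fun h => hvn (Or.inl h), hvT, hvs⟩
  · rintro ⟨hvn, hvT, hvs⟩
    refine ⟨hvT, hvs, ?_⟩
    rintro (rfl | rfl)
    · exact hvn rfl
    · exact hyT hvT

lemma sdiff_sdiff_pair {T s : Finset V} {a y : V} (haT : a ∈ T) :
    (s \ ({a, y} : Finset V)) \ T = (s \ T).erase y := by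
  ext v
  simp only [Finset.mem_sdiff, Finset.mem_erase, Finset.mem_insert, Finset.mem_singleton]
  constructor
  · rintro ⟨⟨hvs, hvn⟩, hvT⟩
    exact ⟨fun h => hvn (Or.inr h), hvs, hvT⟩
  · rintro ⟨hvy, hvs, hvT⟩
    refine ⟨⟨hvs, ?_⟩, hvT⟩
    rintro (rfl | rfl)
    · exact hvT haT
    · exact hvy rfl

lemma pmSet_card_lower : ∀ (c : ℕ) (T s : Finset V), (T ∩ s).card = c → Even c →
    Even s.card → c ≤ (s \ T).card → (s.card - c - 1)‼ ≤ (pmSet T s).card := by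
  intro c
  induction c using Nat.strong_induction_on with
  | _ c ih =>
  intro T s hc hceven hseven hcq
  rcases Nat.eq_zero_or_pos c with rfl | hcpos
  · obtain ⟨m, hm⟩ := hseven
    have hm2 : s.card = 2 * m := by omega
    have hsubset : pmSet (∅ : Finset V) s ⊆ pmSet T s := by
      intro M hM
      obtain ⟨hpm, _⟩ := mem_pmSet.1 hM
      rw [mem_pmSet]
      refine ⟨hpm, fun e he => ?_⟩
      have heT : e ∩ T = ∅ := by
        rw [← Finset.subset_empty]
        intro v hv
        rw [Finset.mem_inter] at hv
        have hvs : v ∈ s := PMOn.edge_subset hpm he hv.1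
        have hmem : v ∈ T ∩ s := Finset.mem_inter.2 ⟨hv.2, hvs⟩
        rwa [Finset.card_eq_zero.1 hc] at hmem
      rw [heT]
      simp
    calc (s.card - 0 - 1)‼ = (2 * m - 1)‼ := by rw [hm2, Nat.sub_zero]
    _ = (pmSet (∅ : Finset V) s).card := (pmSet_empty_card m s hm2).symm
    _ ≤ (pmSet T s).card := Finset.card_le_card hsubset
  · have hc2 : 2 ≤ c := by rcases hceven with ⟨k, hk⟩; omega
    have hq2 : 2 ≤ (s \ T).card := le_trans hc2 hcq
    set q := (s \ T).card with hqdef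
    have hscard : s.card = c + q := by
      rw [← hc, hqdef, ← Finset.card_inter_add_card_sdiff s T, Finset.inter_comm]
    obtain ⟨a, haTs⟩ := Finset.card_pos.1 (show 0 < (T ∩ s).card by omega)
    have haT : a ∈ T := (Finset.mem_inter.1 haTs).1
    have has : a ∈ s := (Finset.mem_inter.1 haTs).2
    rw [pmSet_card_rec T s a has, allowed_eq haT]
    have hinner : ∀ y ∈ s \ T, (q - 1) * (q - 3)‼ ≤ (pmSet T (s \ ({a, y} : Finset V))).card := by
      intro y hy
      rw [Finset.mem_sdiff] at hy
      obtain ⟨hys, hyT⟩ := hy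
      have hya : y ≠ a := fun h => hyT (h ▸ haT)
      set s1 := s \ ({a, y} : Finset V) with hs1
      have hsub1 : ({a, y} : Finset V) ⊆ s := by
        intro v hv
        rcases Finset.mem_insert.1 hv with rfl | hv
        · exact has
        · rw [Finset.mem_singleton.1 hv]; exact hys
      have hs1card : s1.card = s.card - 2 := by
        rw [hs1, Finset.card_sdiff_of_subset hsub1, Finset.card_pair (Ne.symm hya)]
      have hTs1 : T ∩ s1 = (T ∩ s).erase a := inter_sdiff_pair hyT
      have hTs1card : (T ∩ s1).card = c - 1 := by
        rw [hTs1, Finset.card_erase_of_mem haTs, hc]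
      obtain ⟨a2, ha2⟩ := Finset.card_pos.1 (show 0 < (T ∩ s1).card by omega)
      have ha2T : a2 ∈ T := (Finset.mem_inter.1 ha2).1
      have ha2s1 : a2 ∈ s1 := (Finset.mem_inter.1 ha2).2
      rw [pmSet_card_rec T s1 a2 ha2s1, allowed_eq ha2T]
      have hs1T : s1 \ T = (s \ T).erase y := sdiff_sdiff_pair haT
      have hs1Tcard : (s1 \ T).card = q - 1 := by
        rw [hs1T, Finset.card_erase_of_mem (Finset.mem_sdiff.2 ⟨hys, hyT⟩)]
      have hinner2 : ∀ y2 ∈ s1 \ T, (q - 3)‼ ≤ (pmSet T (s1 \ ({a2, y2} : Finset V))).card := by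
        intro y2 hy2
        rw [Finset.mem_sdiff] at hy2
        obtain ⟨hy2s1, hy2T⟩ := hy2
        have hy2a2 : y2 ≠ a2 := fun h => hy2T (h ▸ ha2T)
        set s2 := s1 \ ({a2, y2} : Finset V) with hs2
        have hsub2 : ({a2, y2} : Finset V) ⊆ s1 := by
          intro v hv
          rcases Finset.mem_insert.1 hv with rfl | hv
          · exact ha2s1
          · rw [Finset.mem_singleton.1 hv]; exact hy2s1
        have hs2card : s2.card = s.card - 4 := by
          rw [hs2, Finset.card_sdiff_of_subset hsub2, Finset.card_pair (Ne.symm hy2a2), hs1card]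
          omega
        have hTs2 : (T ∩ s2).card = c - 2 := by
          rw [hs2, inter_sdiff_pair hy2T, Finset.card_erase_of_mem ha2, hTs1card]
          omega
        have hs2T : (s2 \ T).card = q - 2 := by
          rw [hs2, sdiff_sdiff_pair ha2T, Finset.card_erase_of_mem
            (Finset.mem_sdiff.2 ⟨hy2s1, hy2T⟩), hs1Tcard]
          omega
        have hkey := ih (c - 2) (by omega) T s2 hTs2
          (by rcases hceven with ⟨k, hk⟩; exact ⟨k - 1, by omega⟩)
          (by rcases hseven with ⟨k, hk⟩; exact ⟨k - 2, by omega⟩)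
          (by omega)
        have harith : s2.card - (c - 2) - 1 = q - 3 := by omega
        rwa [harith] at hkey
      calc (q - 1) * (q - 3)‼ = ∑ _y2 ∈ s1 \ T, (q - 3)‼ := by
            rw [Finset.sum_const, smul_eq_mul, hs1Tcard]
      _ ≤ ∑ y2 ∈ s1 \ T, (pmSet T (s1 \ ({a2, y2} : Finset V))).card :=
            Finset.sum_le_sum hinner2
    calc (s.card - c - 1)‼ = (q - 1)‼ := by
          congr 1
          omega
    _ ≤ q * ((q - 1) * (q - 3)‼) := dF_ineq hq2
    _ = ∑ _y ∈ s \ T, (q - 1) * (q - 3)‼ := by rw [Finset.sum_const, smul_eq_mul]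
    _ ≤ ∑ y ∈ s \ T, (pmSet T (s \ ({a, y} : Finset V))).card := Finset.sum_le_sum hinner

/-- The pattern induced by `M` on the vertex set `VX`. -/
noncomputable def patt (VX : Finset V) (M : Finset (Finset V)) : Finset (Finset V) :=
  @Finset.filter _ (fun b => b.Nonempty) (Classical.decPred _) (M.image (· ∩ VX))

lemma mem_patt {VX : Finset V} {M : Finset (Finset V)} {b : Finset V} :
    b ∈ patt VX M ↔ (∃ e ∈ M, e ∩ VX = b) ∧ b.Nonempty := by
  classical
  simp [patt, Finset.mem_filter, Finset.mem_image]

/-- Partial pairings of `VX` with at least `VX.card - nn` pairs. -/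
def IsPatt (VX : Finset V) (nn : ℕ) (W : Finset (Finset V)) : Prop :=
  (∀ b ∈ W, b ⊆ VX ∧ (b.card = 1 ∨ b.card = 2)) ∧
  (∀ b ∈ W, ∀ b' ∈ W, b ≠ b' → Disjoint b b') ∧
  W.biUnion id = VX ∧
  VX.card - nn ≤ (W.filter (fun b => b.card = 2)).card

noncomputable def pattSet (VX : Finset V) (nn : ℕ) : Finset (Finset (Finset V)) :=
  @Finset.filter _ (IsPatt VX nn) (Classical.decPred _) Finset.univ

lemma mem_pattSet {VX : Finset V} {nn : ℕ} {W : Finset (Finset V)} :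
    W ∈ pattSet VX nn ↔ IsPatt VX nn W := by
  classical
  simp [pattSet]

lemma patt_mem_pattSet {nn : ℕ} (hV : (Finset.univ : Finset V).card = 2 * nn)
    {VX : Finset V} {M : Finset (Finset V)} (hM : M ∈ pmSet (∅ : Finset V) Finset.univ) :
    patt VX M ∈ pattSet VX nn := by
  classical
  obtain ⟨hpm, -⟩ := mem_pmSet.1 hM
  obtain ⟨hc, hd, hb⟩ := hpm
  have hMcard : M.card = nn := by
    have := PMOn_card ⟨hc, hd, hb⟩
    omega
  have hblock : ∀ b ∈ patt VX M, b ⊆ VX ∧ (b.card = 1 ∨ b.card = 2) := by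
    intro b hbmem
    obtain ⟨⟨e, he, heb⟩, hbne⟩ := mem_patt.1 hbmem
    have h1 : b ⊆ VX := heb ▸ Finset.inter_subset_right
    have h2 : b.card ≤ 2 := by
      rw [← heb]
      calc (e ∩ VX).card ≤ e.card := Finset.card_le_card Finset.inter_subset_left
      _ = 2 := hc e he
    have h3 : 1 ≤ b.card := Finset.card_pos.2 hbne
    exact ⟨h1, by omega⟩
  have hdisjW : ∀ b ∈ patt VX M, ∀ b' ∈ patt VX M, b ≠ b' → Disjoint b b' := by
    intro b hbmem b' hbmem' hne
    obtain ⟨⟨e, he, heb⟩, -⟩ := mem_patt.1 hbmem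
    obtain ⟨⟨e', he', heb'⟩, -⟩ := mem_patt.1 hbmem'
    have hee : e ≠ e' := by
      rintro rfl
      exact hne (heb ▸ heb' ▸ rfl)
    have := hd e he e' he' hee
    rw [← heb, ← heb']
    exact Finset.disjoint_of_subset_left Finset.inter_subset_left
      (Finset.disjoint_of_subset_right Finset.inter_subset_left this)
  have hcover : (patt VX M).biUnion id = VX := by
    ext v
    simp only [Finset.mem_biUnion, id_eq]
    constructor
    · rintro ⟨b, hbmem, hv⟩
      exact (hblock b hbmem).1 hv
    · intro hv
      have hvuniv : v ∈ M.biUnion id := hb ▸ Finset.mem_univ v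
      obtain ⟨e, he, hve⟩ := Finset.mem_biUnion.1 hvuniv
      refine ⟨e ∩ VX, mem_patt.2 ⟨⟨e, he, rfl⟩, ⟨v, Finset.mem_inter.2 ⟨hve, hv⟩⟩⟩,
        Finset.mem_inter.2 ⟨hve, hv⟩⟩
  refine mem_pattSet.2 ⟨hblock, hdisjW, hcover, ?_⟩
  set p := patt VX M with hp
  set j := (p.filter (fun b => b.card = 2)).card with hj
  set k := (p.filter (fun b => ¬ b.card = 2)).card with hk
  have hjk : j + k = p.card := Finset.card_filter_add_card_filter_not _
  have hpcard : p.card ≤ nn := by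
    have hsub : p ⊆ M.image (· ∩ VX) := by
      intro b hbm
      obtain ⟨⟨e, he, heb⟩, -⟩ := mem_patt.1 hbm
      exact Finset.mem_image.2 ⟨e, he, heb⟩
    calc p.card ≤ (M.image (· ∩ VX)).card := Finset.card_le_card hsub
    _ ≤ M.card := Finset.card_image_le
    _ = nn := hMcard
  have hsum : ∑ b ∈ p, b.card = VX.card := by
    rw [← hcover]
    exact (Finset.card_biUnion (fun b hb1 b' hb2 hne => hdisjW b hb1 b' hb2 hne)).symm
  have hsum2 : ∑ b ∈ p, b.card = 2 * j + k := by
    rw [← Finset.sum_filter_add_sum_filter_not p (fun b => b.card = 2)]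
    have e1 : ∑ b ∈ p.filter (fun b => b.card = 2), b.card = 2 * j := by
      rw [Finset.sum_congr rfl (fun b hbm => (Finset.mem_filter.1 hbm).2), Finset.sum_const,
        smul_eq_mul, ← hj, mul_comm]
    have e2 : ∑ b ∈ p.filter (fun b => ¬ b.card = 2), b.card = k := by
      have : ∀ b ∈ p.filter (fun b => ¬ b.card = 2), b.card = 1 := by
        intro b hbm
        rw [Finset.mem_filter] at hbm
        rcases (hblock b hbm.1).2 with h | h
        · exact h
        · exact absurd h hbm.2
      rw [Finset.sum_congr rfl this, Finset.sum_const, smul_eq_mul, mul_one, ← hk]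
    rw [e1, e2]
  omega

lemma fiber_card_lower {nn xx : ℕ} (hV : (Finset.univ : Finset V).card = 2 * nn)
    {VX : Finset V} (hVX : VX.card = 2 * xx) (hxn : xx ≤ nn)
    {W : Finset (Finset V)} (hW : W ∈ pattSet VX nn) :
    (2 * (nn - xx) - 1)‼ ≤ ((pmSet (∅ : Finset V) Finset.univ).filter
        (fun M => patt VX M = W)).card := by
  classical
  obtain ⟨hblock, hdisjW, hcover, hfeas⟩ := mem_pattSet.1 hW
  set P := W.filter (fun b => b.card = 2) with hP
  set U := P.biUnion id with hU
  set T := VX \ U with hT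
  set s := (Finset.univ : Finset V) \ U with hs
  set j := P.card with hj
  have hPsubW : P ⊆ W := Finset.filter_subset _ _
  have hPcard2 : ∀ b ∈ P, b.card = 2 := fun b hbm => (Finset.mem_filter.1 hbm).2
  have hPdisj : ∀ b ∈ P, ∀ b' ∈ P, b ≠ b' → Disjoint b b' :=
    fun b hbm b' hbm' => hdisjW b (hPsubW hbm) b' (hPsubW hbm')
  have hPMOnP : PMOn U P := ⟨hPcard2, hPdisj, hU.symm⟩
  have hUcard : U.card = 2 * j := by
    have := PMOn_card hPMOnP
    omega
  have hUsub : U ⊆ VX := by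
    intro v hv
    obtain ⟨b, hbm, hvb⟩ := Finset.mem_biUnion.1 hv
    exact (hblock b (hPsubW hbm)).1 hvb
  have hjx : j ≤ xx := by
    have := Finset.card_le_card hUsub
    omega
  have hTcard : T.card = 2 * xx - 2 * j := by
    rw [hT, Finset.card_sdiff_of_subset hUsub, hVX, hUcard]
  have hscard : s.card = 2 * nn - 2 * j := by
    rw [hs, Finset.card_sdiff_of_subset (Finset.subset_univ U), hV, hUcard]
  have hTs : T ⊆ s := fun v hv => by
    rw [hT, Finset.mem_sdiff] at hv
    rw [hs, Finset.mem_sdiff]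
    exact ⟨Finset.mem_univ v, hv.2⟩
  have hTinters : T ∩ s = T := Finset.inter_eq_left.2 hTs
  have hsdT : s \ T = Finset.univ \ VX := by
    ext v
    simp only [hs, hT, Finset.mem_sdiff, Finset.mem_univ, true_and]
    constructor
    · rintro ⟨hvU, hvn⟩
      intro hvVX
      exact hvn ⟨hvVX, hvU⟩
    · intro hvVX
      exact ⟨fun hvU => hvVX (hUsub hvU), fun h => hvVX h.1⟩
  have hsdTcard : (s \ T).card = 2 * nn - 2 * xx := by
    rw [hsdT, Finset.card_sdiff_of_subset (Finset.subset_univ VX), hV, hVX]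
  have hsingleW : ∀ t ∈ T, ({t} : Finset V) ∈ W := by
    intro t ht
    rw [hT, Finset.mem_sdiff] at ht
    have htVX : t ∈ VX := ht.1
    have := hcover ▸ htVX
    obtain ⟨b, hbm, htb⟩ := Finset.mem_biUnion.1 this
    rcases (hblock b hbm).2 with h1 | h2
    · obtain ⟨w, hw⟩ := Finset.card_eq_one.1 h1
      have : t = w := by rw [hw] at htb; exact Finset.mem_singleton.1 htb
      rwa [this, ← hw]
    · exfalso
      apply ht.2
      rw [hU]
      exact Finset.mem_biUnion.2 ⟨b, Finset.mem_filter.2 ⟨hbm, h2⟩, htb⟩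
  have hsingleT : ∀ b ∈ W, b.card = 1 → ∃ t ∈ T, b = {t} := by
    intro b hbm h1
    obtain ⟨t, ht⟩ := Finset.card_eq_one.1 h1
    refine ⟨t, ?_, ht⟩
    rw [hT, Finset.mem_sdiff]
    have htVX : t ∈ VX := (hblock b hbm).1 (ht ▸ Finset.mem_singleton_self t)
    refine ⟨htVX, fun htU => ?_⟩
    obtain ⟨p, hpm, htp⟩ := Finset.mem_biUnion.1 (hU ▸ htU)
    have hpb : p ≠ b := by
      intro h
      have := hPcard2 p hpm
      rw [h, h1] at this
      omega
    exact Finset.disjoint_left.1 (hdisjW p (hPsubW hpm) b hbm hpb) htp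
      (ht ▸ Finset.mem_singleton_self t)
  have hbij : ((pmSet (∅ : Finset V) Finset.univ).filter (fun M => patt VX M = W)).card
      = (pmSet T s).card := by
    refine Finset.card_bij' (fun M _ => M \ P) (fun N _ => N ∪ P) ?_ ?_ ?_ ?_
    · -- forward membership
      intro M hM
      rw [Finset.mem_filter] at hM
      obtain ⟨hM1, hpatt⟩ := hM
      obtain ⟨hpm, -⟩ := mem_pmSet.1 hM1
      have hPM : P ⊆ M := by
        intro b hbm
        have hbW : b ∈ W := hPsubW hbm
        rw [← hpatt] at hbW
        obtain ⟨⟨e, he, heb⟩, -⟩ := mem_patt.1 hbW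
        have hbe : b ⊆ e := heb ▸ Finset.inter_subset_left
        have : e.card ≤ b.card := by rw [hPcard2 b hbm, hpm.1 e he]
        rw [Finset.eq_of_subset_of_card_le hbe this]
        exact he
      have hsd := PMOn_sdiff hpm hPM
      rw [← hU, ← hs] at hsd
      rw [mem_pmSet]
      refine ⟨hsd, fun e he => ?_⟩
      rw [Finset.mem_sdiff] at he
      by_contra hcon
      push_neg at hcon
      have h2 : (e ∩ VX).card = 2 := by
        have hle : (e ∩ T).card ≤ (e ∩ VX).card :=
          Finset.card_le_card (Finset.inter_subset_inter Finset.Subset.rfl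
            (hT ▸ Finset.sdiff_subset))
        have hle2 : (e ∩ VX).card ≤ e.card := Finset.card_le_card Finset.inter_subset_left
        have := hpm.1 e he.1
        omega
      have hmem : e ∩ VX ∈ W := by
        rw [← hpatt]
        exact mem_patt.2 ⟨⟨e, he.1, rfl⟩, Finset.card_pos.1 (by omega)⟩
      have heP : e ∩ VX ∈ P := Finset.mem_filter.2 ⟨hmem, h2⟩
      have hee : e ∩ VX = e := by
        apply Finset.eq_of_subset_of_card_le Finset.inter_subset_left
        rw [h2, hpm.1 e he.1]
      rw [hee] at heP
      exact he.2 heP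
    · -- backward membership
      intro N hN
      obtain ⟨hpmN, hcross⟩ := mem_pmSet.1 hN
      have hNP : Disjoint N P := by
        rw [Finset.disjoint_left]
        intro e heN heP
        have h1 : e ⊆ s := PMOn.edge_subset hpmN heN
        have h2 : e ⊆ U := PMOn.edge_subset hPMOnP heP
        obtain ⟨v, hv⟩ := Finset.card_pos.1 (show 0 < e.card by rw [hPcard2 e heP]; omega)
        have := h1 hv
        rw [hs, Finset.mem_sdiff] at this
        exact this.2 (h2 hv)
      have hpmM : PMOn Finset.univ (N ∪ P) := by
        have := PMOn_union hpmN hPMOnP (by rw [hs]; exact Finset.sdiff_disjoint)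
        rwa [Finset.sdiff_union_of_subset (Finset.subset_univ U)] at this
      have hK1 : ∀ e ∈ P, e ∩ VX = e := by
        intro e hem
        exact Finset.inter_eq_left.2 ((PMOn.edge_subset hPMOnP hem).trans hUsub)
      have hK2 : ∀ e ∈ N, e ∩ VX = e ∩ T := by
        intro e hem
        ext v
        simp only [Finset.mem_inter, hT, Finset.mem_sdiff]
        constructor
        · rintro ⟨hve, hvVX⟩
          refine ⟨hve, hvVX, fun hvU => ?_⟩
          have := PMOn.edge_subset hpmN hem hve
          rw [hs, Finset.mem_sdiff] at this
          exact this.2 hvU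
        · rintro ⟨hve, hvVX, -⟩
          exact ⟨hve, hvVX⟩
      have hpatt : patt VX (N ∪ P) = W := by
        ext b
        rw [mem_patt]
        constructor
        · rintro ⟨⟨e, he, heb⟩, hbne⟩
          rcases Finset.mem_union.1 he with heN | heP
          · have hb1 : b = e ∩ T := heb ▸ hK2 e heN
            have hble : b.card ≤ 1 := hb1 ▸ hcross e heN
            have hb1' : b.card = 1 := by
              have := Finset.card_pos.2 hbne
              omega
            obtain ⟨t, ht⟩ := Finset.card_eq_one.1 hb1'
            have htT : t ∈ T := by
              have : t ∈ e ∩ T := by rw [← hb1, ht]; exact Finset.mem_singleton_self t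
              exact (Finset.mem_inter.1 this).2
            rw [ht]
            exact hsingleW t htT
          · rw [← heb, hK1 e heP]
            exact hPsubW heP
        · intro hbW
          rcases (hblock b hbW).2 with h1 | h2
          · obtain ⟨t, htT, hbt⟩ := hsingleT b hbW h1
            have hts : t ∈ s := hTs htT
            obtain ⟨e, heN, hte⟩ := Finset.mem_biUnion.1 (hpmN.2.2 ▸ hts)
            refine ⟨⟨e, Finset.mem_union_left P heN, ?_⟩, by rw [hbt]; exact ⟨t, Finset.mem_singleton_self t⟩⟩
            rw [hK2 e heN, hbt]
            apply Finset.eq_singleton_iff_unique_mem.2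
            refine ⟨Finset.mem_inter.2 ⟨hte, htT⟩, fun u hu => ?_⟩
            exact Finset.card_le_one.1 (hcross e heN) u hu t (Finset.mem_inter.2 ⟨hte, htT⟩)
          · have hbP : b ∈ P := Finset.mem_filter.2 ⟨hbW, h2⟩
            refine ⟨⟨b, Finset.mem_union_right N hbP, hK1 b hbP⟩,
              Finset.card_pos.1 (by omega)⟩
      rw [Finset.mem_filter, mem_pmSet]
      exact ⟨⟨hpmM, fun e he => by simp⟩, hpatt⟩
    · -- left inverse
      intro M hM
      rw [Finset.mem_filter] at hM
      obtain ⟨hM1, hpatt⟩ := hM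
      obtain ⟨hpm, -⟩ := mem_pmSet.1 hM1
      have hPM : P ⊆ M := by
        intro b hbm
        have hbW : b ∈ W := hPsubW hbm
        rw [← hpatt] at hbW
        obtain ⟨⟨e, he, heb⟩, -⟩ := mem_patt.1 hbW
        have hbe : b ⊆ e := heb ▸ Finset.inter_subset_left
        have : e.card ≤ b.card := by rw [hPcard2 b hbm, hpm.1 e he]
        rw [Finset.eq_of_subset_of_card_le hbe this]
        exact he
      exact Finset.sdiff_union_of_subset hPM
    · -- right inverse
      intro N hN
      obtain ⟨hpmN, -⟩ := mem_pmSet.1 hN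
      have hNP : Disjoint N P := by
        rw [Finset.disjoint_left]
        intro e heN heP
        have h1 : e ⊆ s := PMOn.edge_subset hpmN heN
        have h2 : e ⊆ U := PMOn.edge_subset hPMOnP heP
        obtain ⟨v, hv⟩ := Finset.card_pos.1 (show 0 < e.card by rw [hPcard2 e heP]; omega)
        have := h1 hv
        rw [hs, Finset.mem_sdiff] at this
        exact this.2 (h2 hv)
      show (N ∪ P) \ P = N
      rw [Finset.union_sdiff_right]
      exact Finset.sdiff_eq_self_of_disjoint hNP
  rw [hbij]
  have hlow := pmSet_card_lower T.card T s (by rw [hTinters]) ⟨xx - j, by omega⟩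
    ⟨nn - j, by omega⟩ (by omega)
  have harith : s.card - T.card - 1 = 2 * (nn - xx) - 1 := by
    have h1 : VX.card - nn ≤ j := hfeas
    rw [hVX] at h1
    omega
  rwa [harith] at hlow

lemma contain_card {X : Finset (Finset V)}
    (hX2 : ∀ e ∈ X, e.card = 2) (hXd : ∀ e ∈ X, ∀ f ∈ X, e ≠ f → Disjoint e f) :
    ((pmSet (∅ : Finset V) Finset.univ).filter (fun M => X ⊆ M)).card
      = (pmSet (∅ : Finset V) (Finset.univ \ X.biUnion id)).card := by
  classical
  set VX := X.biUnion id with hVXdef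
  have hpmX : PMOn VX X := ⟨hX2, hXd, rfl⟩
  refine Finset.card_bij' (fun M _ => M \ X) (fun N _ => N ∪ X) ?_ ?_ ?_ ?_
  · intro M hM
    rw [Finset.mem_filter] at hM
    obtain ⟨hM1, hXM⟩ := hM
    obtain ⟨hpm, -⟩ := mem_pmSet.1 hM1
    rw [mem_pmSet]
    exact ⟨PMOn_sdiff hpm hXM, fun e he => by simp⟩
  · intro N hN
    obtain ⟨hpmN, -⟩ := mem_pmSet.1 hN
    rw [Finset.mem_filter, mem_pmSet]
    have := PMOn_union hpmN hpmX Finset.sdiff_disjoint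
    rw [Finset.sdiff_union_of_subset (Finset.subset_univ VX)] at this
    exact ⟨⟨this, fun e he => by simp⟩, Finset.subset_union_right⟩
  · intro M hM
    rw [Finset.mem_filter] at hM
    exact Finset.sdiff_union_of_subset hM.2
  · intro N hN
    obtain ⟨hpmN, -⟩ := mem_pmSet.1 hN
    have hNX : Disjoint N X := by
      rw [Finset.disjoint_left]
      intro e heN heX
      have h1 : e ⊆ Finset.univ \ VX := PMOn.edge_subset hpmN heN
      have h2 : e ⊆ VX := PMOn.edge_subset hpmX heX
      obtain ⟨v, hv⟩ := Finset.card_pos.1 (show 0 < e.card by rw [hX2 e heX]; omega)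
      have := h1 hv
      rw [Finset.mem_sdiff] at this
      exact this.2 (h2 hv)
    show (N ∪ X) \ X = N
    rw [Finset.union_sdiff_right]
    exact Finset.sdiff_eq_self_of_disjoint hNX

lemma pattSet_card_lower {nn xx : ℕ} {VX : Finset V} (hVX : VX.card = 2 * xx)
    (hxn : xx ≤ nn) :
    ∑ j ∈ Finset.Icc (2 * xx - nn) xx, (2 * xx).choose (2 * j) * (2 * j - 1)‼
      ≤ (pattSet VX nn).card := by
  classical
  have hmaps : ∀ W ∈ pattSet VX nn,
      (W.filter (fun b => b.card = 2)).card ∈ Finset.Icc (2 * xx - nn) xx := by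
    intro W hW
    obtain ⟨hblock, hdisjW, hcover, hfeas⟩ := mem_pattSet.1 hW
    set P := W.filter (fun b => b.card = 2) with hP
    have hPsubW : P ⊆ W := Finset.filter_subset _ _
    have hpmP : PMOn (P.biUnion id) P := ⟨fun b hbm => (Finset.mem_filter.1 hbm).2,
      fun b hbm b' hbm' => hdisjW b (hPsubW hbm) b' (hPsubW hbm'), rfl⟩
    have hUcard := PMOn_card hpmP
    have hUsub : P.biUnion id ⊆ VX := by
      intro v hv
      obtain ⟨b, hbm, hvb⟩ := Finset.mem_biUnion.1 hv
      exact (hblock b (hPsubW hbm)).1 hvb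
    have := Finset.card_le_card hUsub
    rw [Finset.mem_Icc]
    constructor
    · have := hfeas
      rw [hVX] at this
      omega
    · omega
  rw [Finset.card_eq_sum_card_fiberwise hmaps]
  apply Finset.sum_le_sum
  intro j hj
  rw [Finset.mem_Icc] at hj
  -- now fiberwise over the pair-union
  have hmaps2 : ∀ W ∈ (pattSet VX nn).filter
      (fun W => (W.filter (fun b => b.card = 2)).card = j),
      (W.filter (fun b => b.card = 2)).biUnion id ∈ Finset.powersetCard (2 * j) VX := by
    intro W hW
    rw [Finset.mem_filter] at hW
    obtain ⟨hW1, hWj⟩ := hW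
    obtain ⟨hblock, hdisjW, hcover, hfeas⟩ := mem_pattSet.1 hW1
    set P := W.filter (fun b => b.card = 2) with hP
    have hPsubW : P ⊆ W := Finset.filter_subset _ _
    have hpmP : PMOn (P.biUnion id) P := ⟨fun b hbm => (Finset.mem_filter.1 hbm).2,
      fun b hbm b' hbm' => hdisjW b (hPsubW hbm) b' (hPsubW hbm'), rfl⟩
    have hUcard := PMOn_card hpmP
    rw [Finset.mem_powersetCard]
    constructor
    · intro v hv
      obtain ⟨b, hbm, hvb⟩ := Finset.mem_biUnion.1 hv
      exact (hblock b (hPsubW hbm)).1 hvb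
    · omega
  rw [Finset.card_eq_sum_card_fiberwise hmaps2]
  have hfiber : ∀ U ∈ Finset.powersetCard (2 * j) VX,
      (2 * j - 1)‼ ≤ (((pattSet VX nn).filter
        (fun W => (W.filter (fun b => b.card = 2)).card = j)).filter
        (fun W => (W.filter (fun b => b.card = 2)).biUnion id = U)).card := by
    intro U hU
    rw [Finset.mem_powersetCard] at hU
    obtain ⟨hUsub, hUcard⟩ := hU
    have hL1 : (pmSet (∅ : Finset V) U).card = (2 * j - 1)‼ := pmSet_empty_card j U hUcard
    rw [← hL1]
    apply Finset.card_le_card_of_injOn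
      (fun P => P ∪ (VX \ U).image (fun t => ({t} : Finset V)))
    · intro P hP
      obtain ⟨hpmP, -⟩ := mem_pmSet.1 hP
      set S := (VX \ U).image (fun t => ({t} : Finset V)) with hS
      have hSmem : ∀ b ∈ S, ∃ t, t ∈ VX \ U ∧ b = {t} := by
        intro b hbm
        obtain ⟨t, htm, htb⟩ := Finset.mem_image.1 hbm
        exact ⟨t, htm, htb.symm⟩
      have hfilter : (P ∪ S).filter (fun b => b.card = 2) = P := by
        ext b
        rw [Finset.mem_filter, Finset.mem_union]
        constructor
        · rintro ⟨hb | hb, hb2⟩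
          · exact hb
          · obtain ⟨t, -, rfl⟩ := hSmem b hb
            simp at hb2
        · intro hb
          exact ⟨Or.inl hb, hpmP.1 b hb⟩
      have hPcard : P.card = j := by
        have := PMOn_card hpmP
        omega
      simp only [Finset.mem_coe]
      rw [Finset.mem_filter, Finset.mem_filter, mem_pattSet]
      refine ⟨⟨⟨?_, ?_, ?_, ?_⟩, by rw [hfilter]; exact hPcard⟩, by rw [hfilter, hpmP.2.2]⟩
      · intro b hbm
        rcases Finset.mem_union.1 hbm with hb | hb
        · exact ⟨(PMOn.edge_subset hpmP hb).trans hUsub, Or.inr (hpmP.1 b hb)⟩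
        · obtain ⟨t, htm, rfl⟩ := hSmem b hb
          refine ⟨Finset.singleton_subset_iff.2 ((Finset.mem_sdiff.1 htm).1), Or.inl rfl⟩
      · intro b hbm b' hbm' hne
        rcases Finset.mem_union.1 hbm with hb | hb <;>
          rcases Finset.mem_union.1 hbm' with hb' | hb'
        · exact hpmP.2.1 b hb b' hb' hne
        · obtain ⟨t, htm, rfl⟩ := hSmem b' hb'
          rw [Finset.disjoint_singleton_right]
          intro htb
          exact (Finset.mem_sdiff.1 htm).2 (PMOn.edge_subset hpmP hb htb)
        · obtain ⟨t, htm, rfl⟩ := hSmem b hb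
          rw [Finset.disjoint_singleton_left]
          intro htb
          exact (Finset.mem_sdiff.1 htm).2 (PMOn.edge_subset hpmP hb' htb)
        · obtain ⟨t, htm, rfl⟩ := hSmem b hb
          obtain ⟨t', htm', rfl⟩ := hSmem b' hb'
          rw [Finset.disjoint_singleton_right, Finset.mem_singleton]
          intro h
          exact hne (h ▸ rfl)
      · ext v
        simp only [Finset.mem_biUnion, Finset.mem_union, id_eq]
        constructor
        · rintro ⟨b, hb | hb, hvb⟩
          · exact hUsub ((PMOn.edge_subset hpmP hb) hvb)
          · obtain ⟨t, htm, rfl⟩ := hSmem b hb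
            rw [Finset.mem_singleton.1 hvb]
            exact (Finset.mem_sdiff.1 htm).1
        · intro hv
          by_cases hvU : v ∈ U
          · obtain ⟨e, he, hve⟩ := Finset.mem_biUnion.1 (hpmP.2.2 ▸ hvU)
            exact ⟨e, Or.inl he, hve⟩
          · refine ⟨{v}, Or.inr ?_, Finset.mem_singleton_self v⟩
            exact Finset.mem_image.2 ⟨v, Finset.mem_sdiff.2 ⟨hv, hvU⟩, rfl⟩
      · rw [hfilter, hPcard, hVX]
        omega
    · intro P hP P' hP' heq
      obtain ⟨hpmP, -⟩ := mem_pmSet.1 (Finset.mem_coe.1 hP)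
      obtain ⟨hpmP', -⟩ := mem_pmSet.1 (Finset.mem_coe.1 hP')
      set S := (VX \ U).image (fun t => ({t} : Finset V)) with hS
      have key : ∀ Q : Finset (Finset V), (∀ e ∈ Q, e.card = 2) →
          (Q ∪ S).filter (fun b => b.card = 2) = Q := by
        intro Q hQ2
        ext b
        rw [Finset.mem_filter, Finset.mem_union]
        constructor
        · rintro ⟨hb | hb, hb2⟩
          · exact hb
          · obtain ⟨t, -, htb⟩ := Finset.mem_image.1 hb
            rw [← htb] at hb2
            simp at hb2
        · intro hb
          exact ⟨Or.inl hb, hQ2 b hb⟩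
      have h1 := key P hpmP.1
      have h2 := key P' hpmP'.1
      have heq' : P ∪ S = P' ∪ S := heq
      rw [← h1, ← h2, heq']
  calc (2 * xx).choose (2 * j) * (2 * j - 1)‼
      = ∑ _U ∈ Finset.powersetCard (2 * j) VX, (2 * j - 1)‼ := by
        rw [Finset.sum_const, smul_eq_mul, Finset.card_powersetCard, hVX]
  _ ≤ _ := Finset.sum_le_sum hfiber

lemma fac_dF (j : ℕ) : (2 * j)! = (2 * j - 1)‼ * (2 ^ j * j !) := by
  cases j with
  | zero => decide
  | succ k =>
    have h1 : 2 * (k + 1) = (2 * k + 1) + 1 := by omega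
    rw [h1, Nat.factorial_eq_mul_doubleFactorial]
    have h2 : (2 * k + 1 + 1) = 2 * (k + 1) := by omega
    rw [h2, Nat.doubleFactorial_two_mul]
    have h3 : 2 * (k + 1) - 1 = 2 * k + 1 := by omega
    rw [h3]
    ring

lemma isPM_iff {M : Finset (Finset V)} :
    IsPerfectMatching M ↔ PMOn (Finset.univ : Finset V) M := by
  constructor
  · rintro ⟨⟨hc, hd⟩, hcov⟩
    refine ⟨hc, fun e he f hf hne => hd (Finset.mem_coe.2 he) (Finset.mem_coe.2 hf) hne, ?_⟩
    ext v
    simp only [Finset.mem_biUnion, Finset.mem_univ, iff_true, id_eq]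
    exact hcov v
  · rintro ⟨hc, hd, hb⟩
    refine ⟨⟨hc, fun e he f hf hne => hd e (Finset.mem_coe.1 he) f (Finset.mem_coe.1 hf) hne⟩,
      fun v => ?_⟩
    have hv : v ∈ M.biUnion id := hb ▸ Finset.mem_univ v
    obtain ⟨e, he, hve⟩ := Finset.mem_biUnion.1 hv
    exact ⟨e, he, hve⟩

end PMaux

open PMaux Nat

theorem probContainsMatchingUpperBound (n x : ℕ) (hx1 : 1 ≤ x) (hxn : x ≤ n)
    (X : Finset (Finset (Fin (2*n)))) (hX : IsMatching X) (hXcard : X.card = x) :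
    (Nat.card {M : Finset (Finset (Fin (2*n))) // IsPerfectMatching M ∧ X ⊆ M} : ℚ) /
        (Nat.card {M : Finset (Finset (Fin (2*n))) // IsPerfectMatching M}) ≤
      1 / ∑ j ∈ Finset.Icc (2*x - n) x,
          (((2*x).choose (2*j) : ℚ) * ((2*j).factorial : ℚ)) /
            ((j.factorial : ℚ) * 2^j) := by
  classical
  have hVcard : (Finset.univ : Finset (Fin (2*n))).card = 2*n := by simp
  have hX2 : ∀ e ∈ X, e.card = 2 := hX.1
  have hXd : ∀ e ∈ X, ∀ f ∈ X, e ≠ f → Disjoint e f :=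
    fun e he f hf hne => hX.2 (Finset.mem_coe.2 he) (Finset.mem_coe.2 hf) hne
  set VX := X.biUnion id with hVXdef
  have hVXcard : VX.card = 2*x := by
    have := PMOn_card (⟨hX2, hXd, rfl⟩ : PMOn (X.biUnion id) X)
    rw [hVXdef]
    omega
  have hA : ((pmSet (∅ : Finset (Fin (2*n))) Finset.univ).filter (fun M => X ⊆ M)).card
      = (2*(n-x) - 1)‼ := by
    rw [contain_card hX2 hXd]
    apply pmSet_empty_card
    rw [Finset.card_sdiff_of_subset (Finset.subset_univ _), hVcard, ← hVXdef, hVXcard]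
    omega
  have hB : (pmSet (∅ : Finset (Fin (2*n))) Finset.univ).card = (2*n - 1)‼ :=
    pmSet_empty_card n Finset.univ hVcard
  have hBsum : (pmSet (∅ : Finset (Fin (2*n))) Finset.univ).card
      = ∑ W ∈ pattSet VX n, ((pmSet (∅ : Finset (Fin (2*n))) Finset.univ).filter
          (fun M => patt VX M = W)).card :=
    Finset.card_eq_sum_card_fiberwise (fun M hM => patt_mem_pattSet hVcard hM)
  have hstep1 : (pattSet VX n).card * (2*(n-x) - 1)‼
      ≤ (pmSet (∅ : Finset (Fin (2*n))) Finset.univ).card := by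
    rw [hBsum]
    calc (pattSet VX n).card * (2*(n-x) - 1)‼
        = ∑ _W ∈ pattSet VX n, (2*(n-x) - 1)‼ := by rw [Finset.sum_const, smul_eq_mul]
    _ ≤ _ := Finset.sum_le_sum (fun W hW => fiber_card_lower hVcard hVXcard hxn hW)
  set S' := ∑ j ∈ Finset.Icc (2*x - n) x, (2*x).choose (2*j) * (2*j - 1)‼ with hS'def
  have hS'le : S' ≤ (pattSet VX n).card := pattSet_card_lower hVXcard hxn
  have hkey : S' * (2*(n-x) - 1)‼ ≤ (2*n - 1)‼ := by
    calc S' * (2*(n-x) - 1)‼ ≤ (pattSet VX n).card * (2*(n-x) - 1)‼ :=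
          Nat.mul_le_mul_right _ hS'le
    _ ≤ _ := hstep1
    _ = (2*n - 1)‼ := hB
  -- Nat.card conversions
  have hNA : Nat.card {M : Finset (Finset (Fin (2*n))) // IsPerfectMatching M ∧ X ⊆ M}
      = (2*(n-x) - 1)‼ := by
    rw [Nat.card_eq_fintype_card, Fintype.card_subtype, ← hA]
    congr 1
    ext M
    simp only [Finset.mem_filter, Finset.mem_univ, true_and, mem_pmSet]
    constructor
    · rintro ⟨hpm, hXM⟩
      exact ⟨⟨isPM_iff.1 hpm, fun e he => by simp⟩, hXM⟩
    · rintro ⟨⟨hpm, -⟩, hXM⟩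
      exact ⟨isPM_iff.2 hpm, hXM⟩
  have hNB : Nat.card {M : Finset (Finset (Fin (2*n))) // IsPerfectMatching M}
      = (2*n - 1)‼ := by
    rw [Nat.card_eq_fintype_card, Fintype.card_subtype, ← hB]
    congr 1
    ext M
    simp only [Finset.mem_filter, Finset.mem_univ, true_and, mem_pmSet]
    constructor
    · intro hpm
      exact ⟨isPM_iff.1 hpm, fun e he => by simp⟩
    · rintro ⟨hpm, -⟩
      exact isPM_iff.2 hpm
  rw [hNA, hNB]
  have hSeq : ∑ j ∈ Finset.Icc (2*x - n) x,
      (((2*x).choose (2*j) : ℚ) * ((2*j).factorial : ℚ)) / ((j.factorial : ℚ) * 2^j)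
      = (S' : ℚ) := by
    rw [hS'def]
    push_cast
    apply Finset.sum_congr rfl
    intro j _
    have hne : ((j.factorial : ℚ) * 2^j) ≠ 0 := by positivity
    rw [div_eq_iff hne]
    have hfj := fac_dF j
    have hQ : ((2*j).factorial : ℚ) = ((2*j - 1)‼ : ℚ) * (2^j * (j.factorial : ℚ)) := by
      exact_mod_cast hfj
    rw [hQ]
    ring
  rw [hSeq]
  have hS'pos : 0 < S' := by
    have hmem : x ∈ Finset.Icc (2*x - n) x := Finset.mem_Icc.2 ⟨by omega, le_refl x⟩
    have hterm : 0 < (2*x).choose (2*x) * (2*x - 1)‼ := by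
      rw [Nat.choose_self]
      simpa using Nat.doubleFactorial_pos _
    calc 0 < (2*x).choose (2*x) * (2*x - 1)‼ := hterm
    _ ≤ S' := Finset.single_le_sum (f := fun j => (2*x).choose (2*j) * (2*j - 1)‼)
          (fun j _ => Nat.zero_le _) hmem
  have hBpos : (0 : ℚ) < ((2*n - 1)‼ : ℕ) := by
    exact_mod_cast Nat.doubleFactorial_pos _
  have hS'posQ : (0 : ℚ) < (S' : ℚ) := by exact_mod_cast hS'pos
  rw [div_le_div_iff₀ hBpos hS'posQ, one_mul]
  exact_mod_cast (mul_comm ((2*(n-x) - 1)‼) S' ▸ hkey)
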